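/- arXiv:1104.3034 — 3 statements merged into one kernel-verified Lean document; each statement's English description precedes it below -/
import Mathlib

section
/- Under the zero-drift conditions and with a(1)ã(1)>0, define θ = arccos( -(∑ i j p_{i,j}) / (2√(a(1)ã(1))) ). Then sin(θ)·√(a(1)ã(1)) = √(-d''(1))/(2√2), provided d''(1)<0. -/
lemma iter2_quartic (A B C D E : ℝ) :
    iteratedDeriv 2 (fun x : ℝ => A*x^4 + B*x^3 + C*x^2 + D*x + E) 1
      = 12*A + 6*B + 2*C := by
  have hder : ∀ x : ℝ, HasDerivAt (fun x : ℝ => A*x^4 + B*x^3 + C*x^2 + D*x + E)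
      (4*A*x^3 + 3*B*x^2 + 2*C*x + D) x := by
    intro x
    have h := (((hasDerivAt_pow 4 x).const_mul A).add
        (((hasDerivAt_pow 3 x).const_mul B).add
          (((hasDerivAt_pow 2 x).const_mul C).add
            (((hasDerivAt_id x).const_mul D).add (hasDerivAt_const x E)))))
    convert h using 1
    · rfl
    · rfl
    · funext y; simp only [id, Pi.add_apply]; ring
    · push_cast; ring
  have h1 : deriv (fun x : ℝ => A*x^4 + B*x^3 + C*x^2 + D*x + E)
      = fun x : ℝ => 4*A*x^3 + 3*B*x^2 + 2*C*x + D := by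
    funext x; exact (hder x).deriv
  have hder2 : HasDerivAt (fun x : ℝ => 4*A*x^3 + 3*B*x^2 + 2*C*x + D)
      (12*A + 6*B + 2*C) (1 : ℝ) := by
    have h := (((hasDerivAt_pow 3 (1:ℝ)).const_mul (4*A)).add
        (((hasDerivAt_pow 2 (1:ℝ)).const_mul (3*B)).add
          (((hasDerivAt_id (1:ℝ)).const_mul (2*C)).add (hasDerivAt_const (1:ℝ) D))))
    convert h using 1
    · rfl
    · rfl
    · funext y; simp only [id, Pi.add_apply]; ring
    · push_cast; ring
  rw [show (2:ℕ) = 1 + 1 from rfl, iteratedDeriv_succ, iteratedDeriv_one, h1]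
  exact hder2.deriv

theorem stmt4 (p11 p10 p1m1 p01 p0m1 pm11 pm10 pm1m1 : ℝ)
    (hnn : 0 ≤ p11 ∧ 0 ≤ p10 ∧ 0 ≤ p1m1 ∧ 0 ≤ p01 ∧ 0 ≤ p0m1 ∧ 0 ≤ pm11 ∧ 0 ≤ pm10 ∧ 0 ≤ pm1m1)
    (hsum : p11 + p10 + p1m1 + p01 + p0m1 + pm11 + pm10 + pm1m1 = 1)
    (hdriftx : (p11 + p10 + p1m1) - (pm11 + pm10 + pm1m1) = 0)
    (hdrifty : (p11 + p01 + pm11) - (p1m1 + p0m1 + pm1m1) = 0)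
    (a b c d : ℝ → ℝ)
    (ha : ∀ x, a x = p11*x^2 + p01*x + pm11)
    (hb : ∀ x, b x = p10*x^2 - x + pm10)
    (hc : ∀ x, c x = p1m1*x^2 + p0m1*x + pm1m1)
    (hd : ∀ x, d x = (b x)^2 - 4*(a x)*(c x))
    (hpos : 0 < a 1 * (p11 + p10 + p1m1))
    (hdneg : iteratedDeriv 2 d 1 < 0)
    (θ : ℝ)
    (hθ : θ = Real.arccos (-(p11 - p1m1 - pm11 + pm1m1) /
      (2 * Real.sqrt (a 1 * (p11 + p10 + p1m1))))) :
    Real.sin θ * Real.sqrt (a 1 * (p11 + p10 + p1m1))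
      = Real.sqrt (-(iteratedDeriv 2 d 1)) / (2 * Real.sqrt 2) := by
  -- rewrite d as an explicit quartic
  have hdfun : d = fun x : ℝ =>
      (p10^2 - 4*p11*p1m1)*x^4 + (-2*p10 - 4*(p11*p0m1 + p01*p1m1))*x^3
      + (2*p10*pm10 + 1 - 4*(p11*pm1m1 + p01*p0m1 + pm11*p1m1))*x^2
      + (-2*pm10 - 4*(p01*pm1m1 + pm11*p0m1))*x + (pm10^2 - 4*pm11*pm1m1) := by
    funext x
    rw [hd, ha, hb, hc]; ring
  have hD : iteratedDeriv 2 d 1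
      = 12*(p10^2 - 4*p11*p1m1) + 6*(-2*p10 - 4*(p11*p0m1 + p01*p1m1))
        + 2*(2*p10*pm10 + 1 - 4*(p11*pm1m1 + p01*p0m1 + pm11*p1m1)) := by
    rw [hdfun]; exact iter2_quartic _ _ _ _ _
  set S : ℝ := a 1 * (p11 + p10 + p1m1) with hS
  set K : ℝ := p11 - p1m1 - pm11 + pm1m1 with hK
  -- key algebraic identity
  have hkey : S - K^2/4 = -(iteratedDeriv 2 d 1)/8 := by
    rw [hD, hS, hK, ha]
    linear_combination
      (-(1/4) - (1/4)*p11 + (3/2)*p10 + (1/4)*p1m1 - (1/2)*p01 - (3/4)*pm11 - (1/2)*pm10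
        - (1/4)*pm1m1) * hsum
      + ((1/4) - (3/2)*p11 - (1/2)*p1m1 - (5/4)*p01 - (1/4)*p0m1 - pm11 - (1/2)*pm10) * hdriftx
      + (-(1/4) + (5/2)*p11 + (5/4)*p10 + (1/2)*p01 - (1/2)*pm11 - (1/4)*pm10) * hdrifty
  have hs : 0 < Real.sqrt S := Real.sqrt_pos.mpr hpos
  have hs2 : Real.sqrt S ^ 2 = S := Real.sq_sqrt hpos.le
  set u : ℝ := -K / (2 * Real.sqrt S) with hu
  have hsin : Real.sin θ = Real.sqrt (1 - u^2) := by
    rw [hθ]; exact Real.sin_arccos _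
  have husq : u^2 = K^2 / (4 * S) := by
    rw [hu, div_pow, mul_pow, hs2]; ring
  have hu2 : (1 - u^2) * S = -(iteratedDeriv 2 d 1)/8 := by
    rw [husq]
    have hS0 : S ≠ 0 := ne_of_gt hpos
    have h' : (1 - K^2/(4*S)) * S = S - K^2/4 := by field_simp
    rw [h', hkey]
  have h1u : 0 ≤ 1 - u^2 := by
    nlinarith [hu2, hpos, hdneg]
  rw [hsin, ← Real.sqrt_mul h1u, hu2]
  rw [show (2 : ℝ) * Real.sqrt 2 = Real.sqrt 8 by
    rw [show (8:ℝ) = 2^2 * 2 by norm_num, Real.sqrt_mul (by positivity),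
      Real.sqrt_sq (by norm_num : (0:ℝ) ≤ 2)]]
  rw [← Real.sqrt_div (by linarith : (0:ℝ) ≤ -(iteratedDeriv 2 d 1))]
end

section
/- For integers i₀ ≥ 1, real x₁ ∈ (-1,1) and real p ≥ 0, the integral ∫_{x₁}^{1} t^{i₀} (1-t)^p dt equals p!/i₀^{1+p} + O(i₀^{-2-p}) as i₀ → ∞. In particular for p=0 it equals 1/i₀ + O(1/i₀²). -/
open Filter Asymptotics

lemma cont_integrand {p : ℝ} (hp : 0 ≤ p) (n : ℕ) :
    Continuous fun t : ℝ => t ^ n * (1 - t) ^ p := by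
  have h : Continuous fun x : ℝ => x ^ p :=
    continuous_iff_continuousAt.2 fun x => Real.continuousAt_rpow_const x p (Or.inr hp)
  exact (continuous_pow n).mul (h.comp (continuous_const.sub continuous_id))

lemma beta_eq (p : ℝ) (hp : 0 ≤ p) (n : ℕ) :
    (∫ t in (0:ℝ)..1, t ^ n * (1 - t) ^ p)
      = Real.Gamma ((n:ℝ) + 1) * Real.Gamma (p + 1) / Real.Gamma ((n:ℝ) + 1 + (p + 1)) := by
  set a : ℝ := (n:ℝ) + 1 with ha
  set b : ℝ := p + 1 with hb
  have ha0 : (0:ℝ) < a := by positivity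
  have hb0 : (0:ℝ) < b := by positivity
  have hu : 0 < Complex.re (a:ℂ) := by simpa using ha0
  have hv : 0 < Complex.re (b:ℂ) := by simpa using hb0
  have key := Complex.Gamma_mul_Gamma_eq_betaIntegral hu hv
  have hB : Complex.betaIntegral (a:ℂ) (b:ℂ)
      = ((∫ t in (0:ℝ)..1, t ^ n * (1 - t) ^ p : ℝ) : ℂ) := by
    rw [← intervalIntegral.integral_ofReal, Complex.betaIntegral]
    apply intervalIntegral.integral_congr
    intro x hx
    have hx' : x ∈ Set.Icc (0:ℝ) 1 := by rwa [Set.uIcc_of_le zero_le_one] at hx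
    have h1x : (0:ℝ) ≤ 1 - x := by linarith [hx'.2]
    have e1 : (a:ℂ) - 1 = (n:ℂ) := by rw [ha]; push_cast; ring
    have e2 : (b:ℂ) - 1 = (p:ℂ) := by rw [hb]; push_cast; ring
    have e3 : (1:ℂ) - (x:ℂ) = (((1 - x : ℝ)):ℂ) := by push_cast; ring
    beta_reduce
    rw [e1, e2, e3, Complex.cpow_natCast, ← Complex.ofReal_cpow h1x]
    push_cast
    ring
  rw [hB, ← Complex.ofReal_add, Complex.Gamma_ofReal, Complex.Gamma_ofReal,
    Complex.Gamma_ofReal, ← Complex.ofReal_mul, ← Complex.ofReal_mul,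
    Complex.ofReal_inj] at key
  have hG : Real.Gamma (a + b) ≠ 0 := (Real.Gamma_pos_of_pos (by positivity)).ne'
  rw [eq_div_iff hG]
  linarith [key]

lemma gamma_interp_upper {y s : ℝ} (hy : 0 < y) (hs0 : 0 ≤ s) (hs1 : s ≤ 1) :
    Real.Gamma (y + 1 + s) ≤ Real.Gamma (y + 1) * (y + 1) ^ s := by
  have h1 : (0:ℝ) < y + 1 := by linarith
  have h2 : (0:ℝ) < y + 2 := by linarith
  have hG1 := Real.Gamma_pos_of_pos h1
  have hG2 := Real.Gamma_pos_of_pos h2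
  have hGc := Real.Gamma_pos_of_pos (show (0:ℝ) < y + 1 + s by linarith)
  have hc := Real.convexOn_log_Gamma.2 (Set.mem_Ioi.2 h1) (Set.mem_Ioi.2 h2)
      (by linarith : (0:ℝ) ≤ 1 - s) hs0 (by ring)
  have hcomb : (1 - s) • (y + 1) + s • (y + 2) = y + 1 + s := by
    simp only [smul_eq_mul]; ring
  rw [hcomb] at hc
  simp only [Function.comp, smul_eq_mul] at hc
  have hG2' : Real.Gamma (y + 2) = (y + 1) * Real.Gamma (y + 1) := by
    have := Real.Gamma_add_one (show y + 1 ≠ 0 by positivity)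
    rw [show y + 1 + 1 = y + 2 by ring] at this
    exact this
  have hlog : Real.log (Real.Gamma (y + 1 + s))
      ≤ Real.log (Real.Gamma (y + 1) * (y + 1) ^ s) := by
    rw [Real.log_mul hG1.ne' (Real.rpow_pos_of_pos h1 s).ne', Real.log_rpow h1]
    rw [hG2', Real.log_mul (by positivity) hG1.ne'] at hc
    nlinarith [hc]
  calc Real.Gamma (y + 1 + s) = Real.exp (Real.log (Real.Gamma (y + 1 + s))) :=
        (Real.exp_log hGc).symm
    _ ≤ Real.exp (Real.log (Real.Gamma (y + 1) * (y + 1) ^ s)) := Real.exp_le_exp.2 hlog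
    _ = _ := Real.exp_log (by positivity)

lemma gamma_interp_lower {y s : ℝ} (hy : 0 < y) (hs0 : 0 ≤ s) (hs1 : s ≤ 1) :
    Real.Gamma (y + 1) * (y + s) ^ s ≤ Real.Gamma (y + 1 + s) := by
  have hys : (0:ℝ) < y + s := by linarith
  have h1 : (0:ℝ) < y + 1 := by linarith
  have hG1 := Real.Gamma_pos_of_pos h1
  have hGs := Real.Gamma_pos_of_pos hys
  have hGc := Real.Gamma_pos_of_pos (show (0:ℝ) < y + 1 + s by linarith)
  have hc := Real.convexOn_log_Gamma.2 (Set.mem_Ioi.2 hys)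
      (Set.mem_Ioi.2 (show (0:ℝ) < y + 1 + s by linarith)) hs0
      (by linarith : (0:ℝ) ≤ 1 - s) (by ring)
  have hcomb : s • (y + s) + (1 - s) • (y + 1 + s) = y + 1 := by
    simp only [smul_eq_mul]; ring
  rw [hcomb] at hc
  simp only [Function.comp, smul_eq_mul] at hc
  have hGs' : Real.Gamma (y + 1 + s) = (y + s) * Real.Gamma (y + s) := by
    have := Real.Gamma_add_one hys.ne'
    rw [show y + s + 1 = y + 1 + s by ring] at this
    exact this
  have hlog : Real.log (Real.Gamma (y + 1) * (y + s) ^ s)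
      ≤ Real.log (Real.Gamma (y + 1 + s)) := by
    rw [Real.log_mul hG1.ne' (Real.rpow_pos_of_pos hys s).ne', Real.log_rpow hys]
    have hgs : Real.log (Real.Gamma (y + s))
        = Real.log (Real.Gamma (y + 1 + s)) - Real.log (y + s) := by
      rw [hGs', Real.log_mul hys.ne' hGs.ne']; ring
    rw [hgs] at hc
    nlinarith [hc]
  calc Real.Gamma (y + 1) * (y + s) ^ s
      = Real.exp (Real.log (Real.Gamma (y + 1) * (y + s) ^ s)) :=
        (Real.exp_log (by positivity)).symm
    _ ≤ Real.exp (Real.log (Real.Gamma (y + 1 + s))) := Real.exp_le_exp.2 hlog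
    _ = _ := Real.exp_log hGc

lemma gamma_ratio_bounds {s : ℝ} (hs0 : 0 ≤ s) (hs1 : s ≤ 1) {y : ℝ} (hy : 1 ≤ y) (m : ℕ) :
    Real.Gamma (y + 1) * y ^ ((m:ℝ) + s) ≤ Real.Gamma (y + 1 + ((m:ℝ) + s)) ∧
    Real.Gamma (y + 1 + ((m:ℝ) + s)) ≤ Real.Gamma (y + 1) * (y + 1 + ((m:ℝ) + s)) ^ ((m:ℝ) + s) := by
  have hy0 : (0:ℝ) < y := by linarith
  have hG1 := Real.Gamma_pos_of_pos (show (0:ℝ) < y + 1 by linarith)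
  induction m with
  | zero =>
    simp only [Nat.cast_zero, zero_add]
    constructor
    · calc Real.Gamma (y + 1) * y ^ s ≤ Real.Gamma (y + 1) * (y + s) ^ s := by
            apply mul_le_mul_of_nonneg_left (Real.rpow_le_rpow hy0.le (by linarith) hs0) hG1.le
        _ ≤ _ := gamma_interp_lower hy0 hs0 hs1
    · calc Real.Gamma (y + 1 + s) ≤ Real.Gamma (y + 1) * (y + 1) ^ s :=
            gamma_interp_upper hy0 hs0 hs1
        _ ≤ _ := by
            apply mul_le_mul_of_nonneg_left
              (Real.rpow_le_rpow (by linarith) (by linarith) hs0) hG1.le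
    | succ m ih =>
    obtain ⟨ihl, ihu⟩ := ih
    have hms : (0:ℝ) ≤ (m:ℝ) + s := by positivity
    have harg : (0:ℝ) < y + 1 + ((m:ℝ) + s) := by positivity
    have hrec : Real.Gamma (y + 1 + (((m:ℕ)+1:ℕ):ℝ) + s)
        = (y + 1 + ((m:ℝ) + s)) * Real.Gamma (y + 1 + ((m:ℝ) + s)) := by
      have := Real.Gamma_add_one harg.ne'
      rw [show y + 1 + ((m:ℝ) + s) + 1 = y + 1 + (((m:ℕ)+1:ℕ):ℝ) + s by push_cast; ring] at this
      exact this
    have hcast : y + 1 + ((((m:ℕ)+1:ℕ):ℝ) + s) = y + 1 + (((m:ℕ)+1:ℕ):ℝ) + s := by ring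
    constructor
    · rw [hcast, hrec]
      calc Real.Gamma (y + 1) * y ^ ((((m:ℕ)+1:ℕ):ℝ) + s)
          = y * (Real.Gamma (y + 1) * y ^ ((m:ℝ) + s)) := by
            rw [show (((m:ℕ)+1:ℕ):ℝ) + s = ((m:ℝ) + s) + 1 by push_cast; ring,
              Real.rpow_add_one hy0.ne']
            ring
        _ ≤ (y + 1 + ((m:ℝ) + s)) * (Real.Gamma (y + 1) * y ^ ((m:ℝ) + s)) := by
            apply mul_le_mul_of_nonneg_right (by linarith) (by positivity)
        _ ≤ (y + 1 + ((m:ℝ) + s)) * Real.Gamma (y + 1 + ((m:ℝ) + s)) :=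
            mul_le_mul_of_nonneg_left ihl harg.le
    · rw [hcast, hrec]
      calc (y + 1 + ((m:ℝ) + s)) * Real.Gamma (y + 1 + ((m:ℝ) + s))
          ≤ (y + 1 + ((m:ℝ) + s)) * (Real.Gamma (y + 1) * (y + 1 + ((m:ℝ) + s)) ^ ((m:ℝ) + s)) :=
            mul_le_mul_of_nonneg_left ihu harg.le
        _ = Real.Gamma (y + 1) * (y + 1 + ((m:ℝ) + s)) ^ (((m:ℝ) + s) + 1) := by
            rw [Real.rpow_add_one harg.ne']; ring
        _ ≤ Real.Gamma (y + 1) * (y + 1 + (((m:ℕ)+1:ℕ):ℝ) + s) ^ ((((m:ℕ)+1:ℕ):ℝ) + s) := by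
            apply mul_le_mul_of_nonneg_left _ hG1.le
            rw [show (((m:ℕ)+1:ℕ):ℝ) + s = ((m:ℝ) + s) + 1 by push_cast; ring]
            apply Real.rpow_le_rpow harg.le (by push_cast; linarith) (by linarith)

lemma rpow_diff_bound {X a q : ℝ} (hX : 1 ≤ X) (ha : 0 ≤ a) (hq : 0 ≤ q) :
    X ^ (-q) - (X + a) ^ (-q) ≤ (⌈q⌉₊ : ℝ) * a * X ^ (-q - 1) := by
  have hX0 : (0:ℝ) < X := by linarith
  have hXa : (0:ℝ) < X + a := by linarith
  set r : ℝ := X / (X + a) with hr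
  have hr0 : 0 < r := by positivity
  have hr1 : r ≤ 1 := by
    rw [hr, div_le_one hXa]; linarith
  set k : ℕ := ⌈q⌉₊ with hk
  have hqk : q ≤ (k:ℝ) := Nat.le_ceil q
  have key : (X + a) ^ (-q) = X ^ (-q) * r ^ q := by
    rw [hr, Real.div_rpow hX0.le hXa.le, Real.rpow_neg hX0.le, Real.rpow_neg hXa.le]
    field_simp
  have h1 : r ^ q ≥ r ^ (k:ℝ) := Real.rpow_le_rpow_of_exponent_ge hr0 hr1 hqk
  have h2 : r ^ (k:ℝ) = r ^ k := Real.rpow_natCast r k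
  have h3 : 1 - r ^ k ≤ (k:ℝ) * (1 - r) := by
    have hg := geom_sum_mul (x := r) (n := k)
    have hsum : (∑ i ∈ Finset.range k, r ^ i) ≤ (k:ℝ) := by
      calc (∑ i ∈ Finset.range k, r ^ i) ≤ ∑ _i ∈ Finset.range k, (1:ℝ) :=
            Finset.sum_le_sum fun i _ => pow_le_one₀ hr0.le hr1
        _ = (k:ℝ) := by simp
    have hrk : r ^ k ≤ 1 := pow_le_one₀ hr0.le hr1
    nlinarith [hg, hsum]
  have h4 : 1 - r ≤ a / X := by
    rw [hr, show 1 - X / (X + a) = a / (X + a) by field_simp; ring]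
    rw [div_le_div_iff₀ hXa hX0]
    nlinarith
  have h5 : X ^ (-q) - (X + a) ^ (-q) = X ^ (-q) * (1 - r ^ q) := by
    rw [key]; ring
  have h6 : X ^ (-q) * (1 - r ^ q) ≤ X ^ (-q) * ((k:ℝ) * (a / X)) := by
    apply mul_le_mul_of_nonneg_left _ (Real.rpow_nonneg hX0.le _)
    calc 1 - r ^ q ≤ 1 - r ^ (k:ℝ) := by linarith
      _ = 1 - r ^ k := by rw [h2]
      _ ≤ (k:ℝ) * (1 - r) := h3
      _ ≤ (k:ℝ) * (a / X) := by
          apply mul_le_mul_of_nonneg_left h4 (Nat.cast_nonneg k)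
  have h7 : X ^ (-q) * ((k:ℝ) * (a / X)) = (k:ℝ) * a * X ^ (-q - 1) := by
    rw [show -q - 1 = -q + (-1) by ring, Real.rpow_add hX0, Real.rpow_neg_one]
    field_simp
  linarith [h5, h6, h7.symm.le, h5.le]

lemma main_bound (p : ℝ) (hp : 0 ≤ p) : ∃ C : ℝ, ∀ n : ℕ, 1 ≤ n →
    |Real.Gamma ((n:ℝ) + 1) * Real.Gamma (p + 1) / Real.Gamma ((n:ℝ) + 1 + (p + 1))
      - Real.Gamma (p + 1) / (n:ℝ) ^ (1 + p)| ≤ C * (n:ℝ) ^ (-(2 + p)) := by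
  set P : ℝ := Real.Gamma (p + 1) with hP
  have hP0 : 0 < P := Real.Gamma_pos_of_pos (by linarith)
  refine ⟨P * ((⌈1 + p⌉₊ : ℝ) * (2 + p)), fun n hn => ?_⟩
  have hX : (1:ℝ) ≤ (n:ℝ) := by exact_mod_cast hn
  have hX0 : (0:ℝ) < (n:ℝ) := by linarith
  set s : ℝ := p - (⌊p⌋₊ : ℝ) with hs
  have hs0 : 0 ≤ s := by
    have := Nat.floor_le hp; linarith
  have hs1 : s ≤ 1 := by
    have := (Nat.lt_floor_add_one p).le; simp only [hs]; linarith
  have hms : ((⌊p⌋₊ + 1 : ℕ) : ℝ) + s = 1 + p := by push_cast; simp only [hs]; ring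
  have hrb := gamma_ratio_bounds hs0 hs1 hX (⌊p⌋₊ + 1)
  rw [hms] at hrb
  obtain ⟨hl, hu⟩ := hrb
  set A : ℝ := Real.Gamma ((n:ℝ) + 1) with hA
  have hA0 : 0 < A := Real.Gamma_pos_of_pos (by linarith)
  set G : ℝ := Real.Gamma ((n:ℝ) + 1 + (1 + p)) with hG
  have hG0 : 0 < G := Real.Gamma_pos_of_pos (by linarith)
  have hGeq : Real.Gamma ((n:ℝ) + 1 + (p + 1)) = G := by rw [hG]; ring_nf
  rw [hGeq]
  have hnq : (0:ℝ) < (n:ℝ) ^ (1 + p) := Real.rpow_pos_of_pos hX0 _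
  have hbq : (0:ℝ) < ((n:ℝ) + 1 + (1 + p)) ^ (1 + p) := Real.rpow_pos_of_pos (by linarith) _
  have hub : A * P / G ≤ P / (n:ℝ) ^ (1 + p) := by
    rw [div_le_div_iff₀ hG0 hnq]
    calc A * P * (n:ℝ) ^ (1 + p) = P * (A * (n:ℝ) ^ (1 + p)) := by ring
      _ ≤ P * G := mul_le_mul_of_nonneg_left hl hP0.le
  have hlb : P / ((n:ℝ) + 1 + (1 + p)) ^ (1 + p) ≤ A * P / G := by
    rw [div_le_div_iff₀ hbq hG0]
    calc P * G ≤ P * (A * ((n:ℝ) + 1 + (1 + p)) ^ (1 + p)) := mul_le_mul_of_nonneg_left hu hP0.le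
      _ = A * P * ((n:ℝ) + 1 + (1 + p)) ^ (1 + p) := by ring
  have hdiff : P / (n:ℝ) ^ (1 + p) - P / ((n:ℝ) + 1 + (1 + p)) ^ (1 + p)
      ≤ P * ((⌈1 + p⌉₊ : ℝ) * (2 + p)) * (n:ℝ) ^ (-(2 + p)) := by
    have hrd := rpow_diff_bound (a := 2 + p) (q := 1 + p) hX (by linarith) (by linarith)
    rw [show (n:ℝ) + (2 + p) = (n:ℝ) + 1 + (1 + p) by ring] at hrd
    have e1 : P / (n:ℝ) ^ (1 + p) = P * (n:ℝ) ^ (-(1 + p)) := by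
      rw [Real.rpow_neg hX0.le]; ring
    have e2 : P / ((n:ℝ) + 1 + (1 + p)) ^ (1 + p) = P * ((n:ℝ) + 1 + (1 + p)) ^ (-(1 + p)) := by
      rw [Real.rpow_neg (by linarith)]; ring
    have e3 : -(1 + p) - 1 = -(2 + p) := by ring
    rw [e1, e2, ← e3]
    calc P * (n:ℝ) ^ (-(1 + p)) - P * ((n:ℝ) + 1 + (1 + p)) ^ (-(1 + p))
        = P * ((n:ℝ) ^ (-(1 + p)) - ((n:ℝ) + 1 + (1 + p)) ^ (-(1 + p))) := by ring
      _ ≤ P * ((⌈1 + p⌉₊ : ℝ) * (2 + p) * (n:ℝ) ^ (-(1 + p) - 1)) :=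
          mul_le_mul_of_nonneg_left hrd hP0.le
      _ = P * ((⌈1 + p⌉₊ : ℝ) * (2 + p)) * (n:ℝ) ^ (-(1 + p) - 1) := by ring
  rw [abs_sub_comm, abs_of_nonneg (by linarith)]
  calc P / (n:ℝ) ^ (1 + p) - A * P / G
      ≤ P / (n:ℝ) ^ (1 + p) - P / ((n:ℝ) + 1 + (1 + p)) ^ (1 + p) := by linarith
    _ ≤ _ := hdiff

theorem stmt6 (x1 : ℝ) (hx1 : x1 ∈ Set.Ioo (-1:ℝ) 1) (p : ℝ) (hp : 0 ≤ p) :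
    (fun i0 : ℕ => (∫ t in x1..1, t^i0 * (1-t)^p) - Real.Gamma (p+1) / (i0:ℝ)^(1+p))
      =O[atTop] fun i0 : ℕ => (i0:ℝ)^(-(2+p)) := by
  obtain ⟨hx1l, hx1r⟩ := hx1
  -- split the integral
  have hsplit : ∀ n : ℕ, (∫ t in x1..1, t^n * (1-t)^p)
      = (∫ t in x1..(0:ℝ), t^n * (1-t)^p) + ∫ t in (0:ℝ)..1, t^n * (1-t)^p := fun n =>
    (intervalIntegral.integral_add_adjacent_intervals
      ((cont_integrand hp n).intervalIntegrable _ _)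
      ((cont_integrand hp n).intervalIntegrable _ _)).symm
  have hfun : (fun i0 : ℕ => (∫ t in x1..1, t^i0 * (1-t)^p) - Real.Gamma (p+1) / (i0:ℝ)^(1+p))
      = fun i0 : ℕ => (∫ t in x1..(0:ℝ), t^i0 * (1-t)^p)
          + ((∫ t in (0:ℝ)..1, t^i0 * (1-t)^p) - Real.Gamma (p+1) / (i0:ℝ)^(1+p)) := by
    funext n; rw [hsplit n]; ring
  rw [hfun]
  apply IsBigO.add
  -- tail piece
  · set r : ℝ := |x1| with hrdef
    have hr1 : r < 1 := abs_lt.2 ⟨hx1l, hx1r⟩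
    have hr0 : 0 ≤ r := abs_nonneg x1
    set k : ℕ := ⌈(2:ℝ) + p⌉₊ with hk
    have htt := tendsto_pow_const_mul_const_pow_of_lt_one k hr0 hr1
    rw [isBigO_iff]
    refine ⟨|x1| * 2 ^ p, ?_⟩
    filter_upwards [htt.eventually_lt_const one_pos, eventually_ge_atTop 1] with n hlt hn1
    have hX : (1:ℝ) ≤ (n:ℝ) := by exact_mod_cast hn1
    have hX0 : (0:ℝ) < (n:ℝ) := by linarith
    have hbd : ∀ t ∈ Set.uIoc x1 (0:ℝ), ‖t^n * (1-t)^p‖ ≤ r^n * 2^p := by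
      intro t ht
      have htabs : |t| ≤ r := by
        rcases Set.mem_uIoc.1 ht with h | h
        · rw [abs_le]; constructor
          · linarith [neg_abs_le x1, h.1]
          · linarith [h.2, hr0]
        · rw [abs_le]; constructor
          · linarith [h.1, hr0]
          · linarith [h.2, le_abs_self x1]
      have ht1 : (0:ℝ) ≤ 1 - t := by
        have := (abs_le.1 htabs).2; linarith
      have ht2 : 1 - t ≤ 2 := by
        have := (abs_le.1 htabs).1; linarith
      rw [norm_mul, norm_pow, Real.norm_eq_abs, Real.norm_eq_abs,
        abs_of_nonneg (Real.rpow_nonneg ht1 p)]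
      apply mul_le_mul (pow_le_pow_left₀ (abs_nonneg t) htabs n)
        (Real.rpow_le_rpow ht1 ht2 hp) (Real.rpow_nonneg ht1 p) (by positivity)
    have hnorm := intervalIntegral.norm_integral_le_of_norm_le_const hbd
    have hrn : r ^ n ≤ (n:ℝ) ^ (-((2:ℝ) + p)) := by
      have hnk : (0:ℝ) < (n:ℝ) ^ k := by positivity
      have h1 : r ^ n ≤ ((n:ℝ) ^ k)⁻¹ := by
        rw [inv_eq_one_div, le_div_iff₀ hnk]
        nlinarith [hlt.le, pow_nonneg hr0 n]
      have h2 : ((n:ℝ) ^ k)⁻¹ = (n:ℝ) ^ (-(k:ℝ)) := by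
        rw [Real.rpow_neg hX0.le, Real.rpow_natCast]
      have h3 : (n:ℝ) ^ (-(k:ℝ)) ≤ (n:ℝ) ^ (-((2:ℝ) + p)) :=
        Real.rpow_le_rpow_of_exponent_le hX (neg_le_neg (Nat.le_ceil _))
      calc r ^ n ≤ ((n:ℝ) ^ k)⁻¹ := h1
        _ = (n:ℝ) ^ (-(k:ℝ)) := h2
        _ ≤ _ := h3
    have hg : ‖(n:ℝ) ^ (-((2:ℝ) + p))‖ = (n:ℝ) ^ (-((2:ℝ) + p)) := by
      rw [Real.norm_eq_abs, abs_of_nonneg (Real.rpow_nonneg hX0.le _)]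
    rw [hg]
    calc ‖∫ t in x1..(0:ℝ), t^n * (1-t)^p‖ ≤ r^n * 2^p * |0 - x1| := hnorm
      _ = |x1| * 2^p * r^n := by rw [zero_sub, abs_neg]; ring
      _ ≤ |x1| * 2^p * (n:ℝ) ^ (-((2:ℝ) + p)) := by
          apply mul_le_mul_of_nonneg_left hrn (by positivity)
  -- main piece
  · obtain ⟨C, hC⟩ := main_bound p hp
    rw [isBigO_iff]
    refine ⟨C, ?_⟩
    filter_upwards [eventually_ge_atTop 1] with n hn1
    have hX : (1:ℝ) ≤ (n:ℝ) := by exact_mod_cast hn1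
    have hg : ‖(n:ℝ) ^ (-((2:ℝ) + p))‖ = (n:ℝ) ^ (-((2:ℝ) + p)) := by
      rw [Real.norm_eq_abs, abs_of_nonneg (Real.rpow_nonneg (by linarith) _)]
    rw [hg, Real.norm_eq_abs, beta_eq p hp n]
    exact hC n hn1
end

section
/- Let p ≥ 0 be an integer and x₁ ∈ (-1,1). Then ∫_{x₁}^{1} t^{i₀}(t-1)^p dt = (-1)^p p!/i₀^{1+p} + O(i₀^{-2-p}) as i₀ → ∞; more precisely, lim_{i₀→∞} i₀^{1+p} ∫_{x₁}^{1} t^{i₀}(t-1)^p dt = (-1)^p p!. -/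
open Filter Asymptotics intervalIntegral Set



lemma ibp (p i : ℕ) (x1 : ℝ) :
    ∫ t in x1..1, t^i * (t-1)^(p+1)
      = -((x1-1)^(p+1) * x1^(i+1)/((i:ℝ)+1))
        - ((p:ℝ)+1)/((i:ℝ)+1) * ∫ t in x1..1, t^(i+1)*(t-1)^p := by
  have hi : ((i:ℝ)+1) ≠ 0 := by positivity
  have h := integral_mul_deriv_eq_deriv_mul_of_hasDerivAt
    (u := fun t : ℝ => (t-1)^(p+1)) (v := fun t : ℝ => t^(i+1)/((i:ℝ)+1))
    (u' := fun t : ℝ => ((p:ℝ)+1)*(t-1)^p) (v' := fun t : ℝ => t^i)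
    (a := x1) (b := 1)
    (by fun_prop) (by fun_prop)
    (fun x _ => by
      have := ((hasDerivAt_id x).sub_const 1).fun_pow (p+1)
      simpa [Nat.add_sub_cancel, mul_comm] using this)
    (fun x _ => by
      have := (hasDerivAt_pow (i+1) x).div_const ((i:ℝ)+1)
      have h2 : ((i:ℝ)+1) * x^i / ((i:ℝ)+1) = x^i := by field_simp
      simpa [Nat.add_sub_cancel, h2] using this)
    ((by fun_prop : Continuous fun t : ℝ => ((p:ℝ)+1)*(t-1)^p).intervalIntegrable _ _)
    ((by fun_prop : Continuous fun t : ℝ => t^i).intervalIntegrable _ _)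
  have h1 : ∫ t in x1..1, t^i * (t-1)^(p+1)
      = ∫ t in x1..1, (t-1)^(p+1) * t^i := by
    simp_rw [mul_comm]
  have h2 : ∫ t in x1..1, ((p:ℝ)+1)*(t-1)^p * (t^(i+1)/((i:ℝ)+1))
      = ((p:ℝ)+1)/((i:ℝ)+1) * ∫ t in x1..1, t^(i+1)*(t-1)^p := by
    rw [← integral_const_mul]
    congr 1; funext t; field_simp
  rw [h1, h, h2]
  field_simp
  rw [sub_self, zero_pow (Nat.succ_ne_zero p)]; ring




lemma key (x1 : ℝ) (hx1 : x1 ∈ Set.Ioo (-1:ℝ) 1) (p : ℕ) :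
    ∃ C : ℝ, 0 ≤ C ∧ ∀ i : ℕ,
      |(∫ t in x1..1, t^i*(t-1)^p)
        - (-1)^p * (p.factorial:ℝ) / ∏ k ∈ Finset.range (p+1), ((i:ℝ)+k+1)|
      ≤ C * |x1|^i := by
  have hx : |x1| < 1 := abs_lt.2 ⟨hx1.1, hx1.2⟩
  have hxnn : (0:ℝ) ≤ |x1| := abs_nonneg _
  have hxpow : ∀ i : ℕ, |x1|^(i+1) ≤ |x1|^i := fun i =>
    pow_le_pow_of_le_one hxnn hx.le (Nat.le_succ i)
  induction p with
  | zero =>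
      refine ⟨1, zero_le_one, fun i => ?_⟩
      have hi : ((i:ℝ)+1) ≠ 0 := by positivity
      have : ∫ t in x1..1, t^i*(t-1)^0 = (1 - x1^(i+1))/((i:ℝ)+1) := by
        simp [integral_pow]
      rw [this]
      have hD : ∏ k ∈ Finset.range (0+1), ((i:ℝ)+k+1) = (i:ℝ)+1 := by simp
      rw [hD]
      have : (1 - x1^(i+1))/((i:ℝ)+1) - (-1)^0 * ((Nat.factorial 0 : ℕ):ℝ)/((i:ℝ)+1)
          = -x1^(i+1)/((i:ℝ)+1) := by
        simp [Nat.factorial]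
        field_simp
        ring
      rw [this]
      rw [abs_div, abs_neg, abs_pow]
      have h1 : (1:ℝ) ≤ |(i:ℝ)+1| := by
        rw [abs_of_pos (by positivity)]; linarith [Nat.cast_nonneg (α := ℝ) i]
      calc |x1|^(i+1) / |(i:ℝ)+1| ≤ |x1|^(i+1) / 1 :=
            div_le_div_of_nonneg_left (by positivity) one_pos h1
        _ = |x1|^(i+1) := by ring
        _ ≤ 1 * |x1|^i := by rw [one_mul]; exact hxpow i
  | succ p ih =>
      obtain ⟨C, hC, hb⟩ := ih
      refine ⟨2^(p+1) + ((p:ℝ)+1)*C, by positivity, fun i => ?_⟩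
      have hi : (0:ℝ) < (i:ℝ)+1 := by positivity
      have hD1 : (0:ℝ) < ∏ k ∈ Finset.range (p+1), (((i+1:ℕ):ℝ)+k+1) := by
        apply Finset.prod_pos; intro k _; positivity
      have hprod : ∏ k ∈ Finset.range (p+1+1), ((i:ℝ)+k+1)
          = ((i:ℝ)+1) * ∏ k ∈ Finset.range (p+1), (((i+1:ℕ):ℝ)+k+1) := by
        rw [Finset.prod_range_succ']
        rw [show ((i:ℝ)+((0:ℕ):ℝ)+1) = (i:ℝ)+1 by norm_num]
        rw [mul_comm]
        congr 1
        apply Finset.prod_congr rfl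
        intro k _
        push_cast; ring
      set J1 := ∫ t in x1..1, t^(i+1)*(t-1)^p with hJ1
      set D1 := ∏ k ∈ Finset.range (p+1), (((i+1:ℕ):ℝ)+k+1) with hD1def
      have heq : (∫ t in x1..1, t^i*(t-1)^(p+1))
          - (-1)^(p+1) * ((p+1).factorial:ℝ) / ∏ k ∈ Finset.range (p+1+1), ((i:ℝ)+k+1)
          = -((x1-1)^(p+1) * x1^(i+1)/((i:ℝ)+1))
            - ((p:ℝ)+1)/((i:ℝ)+1) * (J1 - (-1)^p * (p.factorial:ℝ) / D1) := by
        rw [ibp, hprod, Nat.factorial_succ]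
        push_cast
        field_simp
        ring
      rw [heq]
      have hbnd1 : |(x1-1)^(p+1) * x1^(i+1)/((i:ℝ)+1)| ≤ 2^(p+1) * |x1|^i := by
        rw [abs_div, abs_mul, abs_pow, abs_pow]
        have hx1m : |x1 - 1| ≤ 2 := by
          rw [abs_le]; constructor <;> linarith [hx1.1, hx1.2]
        have h1 : (1:ℝ) ≤ |(i:ℝ)+1| := by
          rw [abs_of_pos hi]; linarith [Nat.cast_nonneg (α := ℝ) i]
        calc |x1-1|^(p+1) * |x1|^(i+1) / |(i:ℝ)+1|
            ≤ |x1-1|^(p+1) * |x1|^(i+1) / 1 :=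
              div_le_div_of_nonneg_left (by positivity) one_pos h1
          _ = |x1-1|^(p+1) * |x1|^(i+1) := by ring
          _ ≤ 2^(p+1) * |x1|^i := by
              apply mul_le_mul (pow_le_pow_left₀ (abs_nonneg _) hx1m _) (hxpow i)
                (by positivity) (by positivity)
      have hbnd2 : |((p:ℝ)+1)/((i:ℝ)+1) * (J1 - (-1)^p * (p.factorial:ℝ) / D1)|
          ≤ ((p:ℝ)+1) * C * |x1|^i := by
        rw [abs_mul, abs_div]
        have h1 : |((p:ℝ)+1)| / |(i:ℝ)+1| ≤ (p:ℝ)+1 := by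
          rw [abs_of_pos (by positivity), abs_of_pos hi]
          rw [div_le_iff₀ hi]
          nlinarith [Nat.cast_nonneg (α := ℝ) i, Nat.cast_nonneg (α := ℝ) p]
        have h2 : |J1 - (-1)^p * (p.factorial:ℝ) / D1| ≤ C * |x1|^(i+1) := by
          have := hb (i+1)
          simpa [hJ1, hD1def] using this
        calc |((p:ℝ)+1)| / |(i:ℝ)+1| * |J1 - (-1)^p * (p.factorial:ℝ) / D1|
            ≤ ((p:ℝ)+1) * (C * |x1|^(i+1)) :=
              mul_le_mul h1 h2 (abs_nonneg _) (by positivity)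
          _ ≤ ((p:ℝ)+1) * (C * |x1|^i) := by
              apply mul_le_mul_of_nonneg_left (mul_le_mul_of_nonneg_left (hxpow i) hC)
                (by positivity)
          _ = ((p:ℝ)+1) * C * |x1|^i := by ring
      calc |-((x1-1)^(p+1) * x1^(i+1)/((i:ℝ)+1))
            - ((p:ℝ)+1)/((i:ℝ)+1) * (J1 - (-1)^p * (p.factorial:ℝ) / D1)|
          ≤ |(x1-1)^(p+1) * x1^(i+1)/((i:ℝ)+1)|
            + |((p:ℝ)+1)/((i:ℝ)+1) * (J1 - (-1)^p * (p.factorial:ℝ) / D1)| := by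
            rw [show -((x1-1)^(p+1) * x1^(i+1)/((i:ℝ)+1))
              - ((p:ℝ)+1)/((i:ℝ)+1) * (J1 - (-1)^p * (p.factorial:ℝ) / D1)
              = -(((x1-1)^(p+1) * x1^(i+1)/((i:ℝ)+1))
                + ((p:ℝ)+1)/((i:ℝ)+1) * (J1 - (-1)^p * (p.factorial:ℝ) / D1)) by ring,
              abs_neg]
            exact abs_add_le _ _
        _ ≤ 2^(p+1) * |x1|^i + ((p:ℝ)+1) * C * |x1|^i := add_le_add hbnd1 hbnd2
        _ = (2^(p+1) + ((p:ℝ)+1)*C) * |x1|^i := by ring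



lemma pow_sub_pow_le' (x c : ℝ) (hx : 1 ≤ x) (hc : 0 ≤ c) (m : ℕ) :
    (x+c)^m - x^m ≤ (m:ℝ) * (x+c)^(m-1) * c := by
  have h := geom_sum₂_mul (x+c) x m
  rw [show x + c - x = c by ring] at h
  rw [← h]
  have hsum : ∑ i ∈ Finset.range m, (x+c)^i * x^(m-1-i) ≤ (m:ℝ) * (x+c)^(m-1) := by
    have := Finset.sum_le_card_nsmul (Finset.range m)
      (fun i => (x+c)^i * x^(m-1-i)) ((x+c)^(m-1)) ?_
    · simpa [Finset.card_range, nsmul_eq_mul] using this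
    · intro i hi
      rw [Finset.mem_range] at hi
      have h1 : x^(m-1-i) ≤ (x+c)^(m-1-i) :=
        pow_le_pow_left₀ (by linarith) (by linarith) _
      calc (x+c)^i * x^(m-1-i) ≤ (x+c)^i * (x+c)^(m-1-i) :=
            mul_le_mul_of_nonneg_left h1 (by positivity)
        _ = (x+c)^(i + (m-1-i)) := by rw [pow_add]
        _ = (x+c)^(m-1) := by congr 1; omega
  exact mul_le_mul_of_nonneg_right hsum hc

lemma ratdiff (p : ℕ) (i : ℕ) (hi : 1 ≤ i) :
    |(-1)^p * (p.factorial:ℝ) / (∏ k ∈ Finset.range (p+1), ((i:ℝ)+k+1))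
      - (-1)^p * (p.factorial:ℝ) / (i:ℝ)^(1+p)|
    ≤ (p.factorial:ℝ) * (((p:ℝ)+1)^2*((p:ℝ)+2)^p) / (i:ℝ)^(2+p) := by
  have hi1 : (1:ℝ) ≤ (i:ℝ) := by exact_mod_cast hi
  have hi0 : (0:ℝ) < (i:ℝ) := by linarith
  set a : ℝ := (p.factorial:ℝ) with ha
  have ha0 : 0 ≤ a := Nat.cast_nonneg _
  set X : ℝ := (i:ℝ)^(1+p) with hX
  have hXpos : 0 < X := by positivity
  set D : ℝ := ∏ k ∈ Finset.range (p+1), ((i:ℝ)+k+1) with hD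
  have hDpos : 0 < D := Finset.prod_pos (fun k _ => by positivity)
  set K : ℝ := ((p:ℝ)+1)^2*((p:ℝ)+2)^p with hK
  have hK0 : 0 ≤ K := by positivity
  have hlow : X ≤ D := by
    rw [hX, hD, add_comm 1 p]
    calc (i:ℝ)^(p+1) = ∏ _k ∈ Finset.range (p+1), (i:ℝ) := by
          rw [Finset.prod_const, Finset.card_range]
      _ ≤ ∏ k ∈ Finset.range (p+1), ((i:ℝ)+k+1) :=
          Finset.prod_le_prod (fun k _ => by positivity)
            (fun k _ => by have := Nat.cast_nonneg (α := ℝ) k; linarith)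
  have hup : D ≤ ((i:ℝ)+((p:ℝ)+1))^(p+1) := by
    rw [hD]
    calc ∏ k ∈ Finset.range (p+1), ((i:ℝ)+k+1)
        ≤ ∏ _k ∈ Finset.range (p+1), ((i:ℝ)+((p:ℝ)+1)) :=
          Finset.prod_le_prod (fun k _ => by positivity)
            (fun k hk => by
              have : (k:ℝ) ≤ (p:ℝ) := by
                exact_mod_cast Nat.lt_succ_iff.mp (Finset.mem_range.mp hk)
              linarith)
      _ = ((i:ℝ)+((p:ℝ)+1))^(p+1) := by rw [Finset.prod_const, Finset.card_range]
  have hdiff : D - X ≤ K * (i:ℝ)^p := by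
    have h1 := pow_sub_pow_le' (i:ℝ) ((p:ℝ)+1) hi1 (by positivity) (p+1)
    simp only [Nat.add_sub_cancel, Nat.cast_add, Nat.cast_one] at h1
    have h2 : (i:ℝ)+((p:ℝ)+1) ≤ ((p:ℝ)+2)*(i:ℝ) := by nlinarith [Nat.cast_nonneg (α := ℝ) p]
    have h3 : ((i:ℝ)+((p:ℝ)+1))^p ≤ (((p:ℝ)+2)*(i:ℝ))^p :=
      pow_le_pow_left₀ (by positivity) h2 p
    have h4 : (((p:ℝ)+2)*(i:ℝ))^p = ((p:ℝ)+2)^p * (i:ℝ)^p := mul_pow _ _ _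
    have hXX : X = (i:ℝ)^(p+1) := by rw [hX, add_comm]
    rw [hXX, hK]
    nlinarith [pow_nonneg hi0.le p, pow_nonneg (by positivity : (0:ℝ) ≤ (i:ℝ)+((p:ℝ)+1)) p]
  have heq : (-1:ℝ)^p * a / D - (-1)^p * a / X = ((-1:ℝ)^p * (a * (X - D))) / (D * X) := by
    field_simp
  rw [heq, abs_div]
  have hnum : |(-1:ℝ)^p * (a * (X - D))| = a * (D - X) := by
    rw [abs_mul, abs_pow, abs_neg, abs_one, one_pow, one_mul, abs_mul,
      abs_of_nonneg ha0, abs_of_nonpos (by linarith)]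
    ring
  have hden : |D * X| = D * X := abs_of_pos (by positivity)
  rw [hnum, hden]
  have hstep : a * (D - X) / (D * X) ≤ a * (K * (i:ℝ)^p) / (X * X) := by
    apply div_le_div₀ (by positivity)
      (mul_le_mul_of_nonneg_left hdiff ha0) (by positivity)
      (mul_le_mul_of_nonneg_right hlow hXpos.le)
  refine hstep.trans (le_of_eq ?_)
  rw [hX]
  have hXX2 : (i:ℝ)^(1+p) * (i:ℝ)^(1+p) = (i:ℝ)^(2+p) * (i:ℝ)^p := by
    rw [← pow_add, ← pow_add]; congr 1; omega
  rw [hXX2]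
  have hne : (i:ℝ) ≠ 0 := hi0.ne'
  field_simp




theorem stmt19 (p : ℕ) (x1 : ℝ) (hx1 : x1 ∈ Set.Ioo (-1:ℝ) 1) :
    ((fun i0 : ℕ => (∫ t in x1..1, t^i0 * (t-1)^p)
        - (-1)^p * (p.factorial : ℝ)/(i0:ℝ)^(1+p))
      =O[atTop] fun i0 : ℕ => (i0:ℝ)^(-(2+(p:ℝ)))) ∧
    Filter.Tendsto (fun i0 : ℕ => (i0:ℝ)^(1+p) * ∫ t in x1..1, t^i0 * (t-1)^p)
      Filter.atTop (nhds ((-1)^p * (p.factorial : ℝ))) := by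
  obtain ⟨C, hC, hb⟩ := key x1 hx1 p
  have hx : |x1| < 1 := abs_lt.2 ⟨hx1.1, hx1.2⟩
  set K : ℝ := ((p:ℝ)+1)^2*((p:ℝ)+2)^p with hK
  set M : ℝ := C + (p.factorial:ℝ) * K with hM
  have hM0 : 0 ≤ M := add_nonneg hC (by positivity)
  have hg0 : Tendsto (fun i : ℕ => (i:ℝ)^(2+p) * |x1|^i) atTop (nhds 0) :=
    tendsto_pow_const_mul_const_pow_of_abs_lt_one (2+p) (by rwa [abs_abs])
  have hgeom : ∀ᶠ i : ℕ in atTop, (i:ℝ)^(2+p) * |x1|^i ≤ 1 :=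
    (hg0.eventually_lt_const one_pos).mono (fun i h => h.le)
  have hmain : ∀ᶠ i : ℕ in atTop,
      |(∫ t in x1..1, t^i*(t-1)^p) - (-1)^p * (p.factorial:ℝ)/(i:ℝ)^(1+p)|
        ≤ M / (i:ℝ)^(2+p) := by
    filter_upwards [eventually_ge_atTop 1, hgeom] with i hi1 hgi
    have hi0 : (0:ℝ) < (i:ℝ) := by exact_mod_cast Nat.lt_of_lt_of_le Nat.zero_lt_one hi1
    have h2p : (0:ℝ) < (i:ℝ)^(2+p) := by positivity
    have hxb : |x1|^i ≤ 1/(i:ℝ)^(2+p) := by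
      rw [le_div_iff₀ h2p, mul_comm]; exact hgi
    calc |(∫ t in x1..1, t^i*(t-1)^p) - (-1)^p * (p.factorial:ℝ)/(i:ℝ)^(1+p)|
        ≤ |(∫ t in x1..1, t^i*(t-1)^p)
            - (-1)^p * (p.factorial:ℝ) / ∏ k ∈ Finset.range (p+1), ((i:ℝ)+k+1)|
          + |(-1)^p * (p.factorial:ℝ) / (∏ k ∈ Finset.range (p+1), ((i:ℝ)+k+1))
            - (-1)^p * (p.factorial:ℝ)/(i:ℝ)^(1+p)| := abs_sub_le _ _ _
      _ ≤ C * |x1|^i + (p.factorial:ℝ) * K / (i:ℝ)^(2+p) :=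
          add_le_add (hb i) (ratdiff p i hi1)
      _ ≤ C * (1/(i:ℝ)^(2+p)) + (p.factorial:ℝ) * K / (i:ℝ)^(2+p) := by
          exact add_le_add_left (mul_le_mul_of_nonneg_left hxb hC) _
      _ = M / (i:ℝ)^(2+p) := by rw [hM]; field_simp
  constructor
  · rw [isBigO_iff]
    refine ⟨M, ?_⟩
    filter_upwards [hmain, eventually_ge_atTop 1] with i hle hi1
    have hi0 : (0:ℝ) < (i:ℝ) := by exact_mod_cast Nat.lt_of_lt_of_le Nat.zero_lt_one hi1
    have hnorm : ‖(i:ℝ)^(-(2+(p:ℝ)))‖ = 1/(i:ℝ)^(2+p) := by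
      rw [Real.norm_eq_abs, abs_of_nonneg (Real.rpow_nonneg hi0.le _),
        show -(2+(p:ℝ)) = -(((2+p:ℕ)):ℝ) by push_cast; ring,
        Real.rpow_neg hi0.le, Real.rpow_natCast, one_div]
    rw [Real.norm_eq_abs, hnorm]
    calc |(∫ t in x1..1, t^i*(t-1)^p) - (-1)^p * (p.factorial:ℝ)/(i:ℝ)^(1+p)|
        ≤ M/((i:ℝ)^(2+p)) := hle
      _ = M * (1/(i:ℝ)^(2+p)) := by ring
  · rw [← tendsto_sub_nhds_zero_iff, tendsto_zero_iff_abs_tendsto_zero]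
    apply squeeze_zero' (Eventually.of_forall fun i => abs_nonneg _)
      ?_ (tendsto_const_div_atTop_nhds_zero_nat M)
    filter_upwards [hmain, eventually_ge_atTop 1] with i hle hi1
    have hi0 : (0:ℝ) < (i:ℝ) := by exact_mod_cast Nat.lt_of_lt_of_le Nat.zero_lt_one hi1
    have hX : (0:ℝ) < (i:ℝ)^(1+p) := by positivity
    have habs : |(i:ℝ)^(1+p) * (∫ t in x1..1, t^i*(t-1)^p) - (-1)^p * (p.factorial:ℝ)|
        = (i:ℝ)^(1+p) * |(∫ t in x1..1, t^i*(t-1)^p)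
            - (-1)^p * (p.factorial:ℝ)/(i:ℝ)^(1+p)| := by
      rw [← abs_of_pos hX, ← abs_mul]
      congr 1
      field_simp
      ring
      rw [abs_of_pos (by positivity : (0:ℝ) < (i:ℝ) * (i:ℝ)^p)]
      ring
    rw [habs]
    calc (i:ℝ)^(1+p) * |(∫ t in x1..1, t^i*(t-1)^p)
            - (-1)^p * (p.factorial:ℝ)/(i:ℝ)^(1+p)|
        ≤ (i:ℝ)^(1+p) * (M / (i:ℝ)^(2+p)) := mul_le_mul_of_nonneg_left hle hX.le
      _ = M / (i:ℝ) := by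
          rw [show 2+p = (1+p)+1 from by omega, pow_succ]
          field_simp
end
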